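/- For a double integrator with bounds a_min = -1, a_max = 1, given initial state (0, v_I) and goal velocity v_G, and any prescribed duration t_w with t_w ≥ |v_G − v_I|, and any displacement d satisfying the reachability bounds (the displacement achieved by a two-piece control with a₁ = 1, a₂ = −1 at the maximal switching time is an upper bound, and with a₁ = −1, a₂ = 1 a lower bound), there exist a₁, a₂ ∈ [−1,1] and t₁ ∈ [0, t_w] with t₂ = t_w − t₁ such that the two-piece control ((a₁,t₁),(a₂,t₂)) satisfies a₁ t₁ + a₂ t₂ = v_G − v_I and v_I t₁ + a₁ t₁²/2 + (v_I + a₁ t₁)t₂ + a₂ t₂²/2 = d. Concretely: the set of displacements achievable in exactly time t_w while ending with velocity v_G is a closed interval [D_min(t_w), D_max(t_w)] where D_max(t_w) = v_I t_w + t_w²/2 − (v_I + t_w − v_G)²/4 and D_min(t_w) = v_I t_w − t_w²/2 + (v_G − v_I + t_w)²/4, and every d in this interval is achieved by some two-piece control. -/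

import Mathlib

/-- Reachable displacements at a prescribed time: for the unit double integrator from
`(0, vI)`, any duration `tw ≥ |vG - vI|`, and any displacement `d` in the closed
interval `[D_min(tw), D_max(tw)]`, some two-piece control `((a₁,t₁),(a₂,t₂))` with
`|a₁|,|a₂| ≤ 1`, `t₁ + t₂ = tw`, ends with velocity `vG` and displacement `d`. -/
theorem two_piece_reachable_interval
    (vI vG tw d : ℝ)
    (htw : |vG - vI| ≤ tw)
    (hDmin : vI * tw - tw ^ 2 / 2 + (vG - vI + tw) ^ 2 / 4 ≤ d)
    (hDmax : d ≤ vI * tw + tw ^ 2 / 2 - (vI + tw - vG) ^ 2 / 4) :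
    ∃ a₁ a₂ t₁ : ℝ, |a₁| ≤ 1 ∧ |a₂| ≤ 1 ∧ 0 ≤ t₁ ∧ t₁ ≤ tw ∧
      a₁ * t₁ + a₂ * (tw - t₁) = vG - vI ∧
      vI * t₁ + a₁ * t₁ ^ 2 / 2 + (vI + a₁ * t₁) * (tw - t₁)
        + a₂ * (tw - t₁) ^ 2 / 2 = d := by
  set Δ : ℝ := vG - vI with hΔ
  have h1 : Δ ≤ tw := (abs_le.mp htw).2
  have h2 : -tw ≤ Δ := (abs_le.mp htw).1
  rcases eq_or_lt_of_le h1 with heq | hlt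
  · -- tw = Δ : full thrust
    refine ⟨1, 1, 0, by norm_num, by norm_num, le_refl 0, by linarith [abs_nonneg (vG - vI)], by ring_nf; linarith, ?_⟩
    have hd : d = vI * tw + tw ^ 2 / 2 := by nlinarith [sq_nonneg (Δ - tw), sq_nonneg (Δ + tw)]
    rw [hd]; ring
  rcases eq_or_lt_of_le h2 with heq2 | hlt2
  · -- tw = -Δ : full brake
    refine ⟨-1, -1, 0, by norm_num, by norm_num, le_refl 0, by linarith [abs_nonneg (vG - vI)], by ring_nf; linarith, ?_⟩
    have hd : d = vI * tw - tw ^ 2 / 2 := by nlinarith [sq_nonneg (Δ - tw), sq_nonneg (Δ + tw)]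
    rw [hd]; ring
  -- now -tw < Δ < tw
  have hp : 0 < tw - Δ := by linarith
  have hq : 0 < tw + Δ := by linarith
  set M : ℝ := vI * tw + Δ * tw / 2 with hM
  rcases le_or_gt M d with hge | hlt'
  · -- a₁ = 1 branch
    set t₁ : ℝ := 2 * (d - M) / (tw - Δ) with ht₁
    have ht₁0 : 0 ≤ t₁ := by rw [ht₁]; apply div_nonneg (by linarith) (by linarith)
    have ht₁le : t₁ ≤ (tw + Δ) / 2 := by
      rw [ht₁, div_le_iff₀ hp]
      nlinarith
    have htlt : t₁ < tw := by linarith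
    have hne : tw - t₁ ≠ 0 := by linarith
    refine ⟨1, (Δ - t₁) / (tw - t₁), t₁, by norm_num, ?_, ht₁0, le_of_lt htlt, ?_, ?_⟩
    · rw [abs_div, abs_of_pos (by linarith : (0:ℝ) < tw - t₁), div_le_one (by linarith)]
      rw [abs_le]; constructor <;> linarith
    · field_simp; ring
    · have hc : (Δ - t₁) / (tw - t₁) * (tw - t₁) ^ 2 / 2 = (Δ - t₁) * (tw - t₁) / 2 := by
        field_simp
      have hd : t₁ * (tw - Δ) = 2 * (d - (vI * tw + Δ * tw / 2)) := by
        rw [ht₁]; field_simp; rw [hM]; ring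
      rw [hc]
      linear_combination hd / 2
  · -- a₁ = -1 branch
    set t₁ : ℝ := 2 * (M - d) / (tw + Δ) with ht₁
    have ht₁0 : 0 ≤ t₁ := by rw [ht₁]; apply div_nonneg (by linarith) (by linarith)
    have ht₁le : t₁ ≤ (tw - Δ) / 2 := by
      rw [ht₁, div_le_iff₀ hq]
      nlinarith
    have htlt : t₁ < tw := by linarith
    have hne : tw - t₁ ≠ 0 := by linarith
    refine ⟨-1, (Δ + t₁) / (tw - t₁), t₁, by norm_num, ?_, ht₁0, le_of_lt htlt, ?_, ?_⟩
    · rw [abs_div, abs_of_pos (by linarith : (0:ℝ) < tw - t₁), div_le_one (by linarith)]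
      rw [abs_le]; constructor <;> linarith
    · field_simp; ring
    · have hc : (Δ + t₁) / (tw - t₁) * (tw - t₁) ^ 2 / 2 = (Δ + t₁) * (tw - t₁) / 2 := by
        field_simp
      have hd : t₁ * (tw + Δ) = 2 * ((vI * tw + Δ * tw / 2) - d) := by
        rw [ht₁]; field_simp; rw [hM]; ring
      rw [hc]
      linear_combination -hd / 2
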